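/- arXiv:2412.08613 — 2 statements merged into one kernel-verified Lean document; each statement's English description precedes it below -/
import Mathlib

section
/- Let E be a real inner product space, h : E → ℝ convex, and f₁ : E → ℝ convex and differentiable with L-Lipschitz continuous gradient (L > 0). Let σ > 0, x₀, y₀, y₁ ∈ E, and suppose x̂ minimizes x ↦ h(x) + (1/(2σ))‖x − (x₀ − σ(y₀ + ∇f₁(x₀)))‖² over E. Then for every x ∈ E: h(x) + f₁(x) − h(x̂) − f₁(x̂) + ⟨x − x̂, y₁⟩ ≥ ⟨x − x̂, (y₁ − y₀) + (1/σ)(x₀ − x̂)⟩ − (L/2)‖x̂ − x₀‖². -/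
open RealInnerProductSpace

section Aux

variable {E : Type*} [NormedAddCommGroup E] [InnerProductSpace ℝ E] [CompleteSpace E]

/-- Subgradient inequality from proximal minimization. -/
lemma prox_subgrad (h : E → ℝ) (hconv : ConvexOn ℝ Set.univ h)
    (σ : ℝ) (hσ : 0 < σ) (a xhat : E)
    (hmin : ∀ x : E, h xhat + 1 / (2 * σ) * ‖xhat - a‖ ^ 2 ≤
      h x + 1 / (2 * σ) * ‖x - a‖ ^ 2) (x : E) :
    h xhat + (1 / σ) * ⟪a - xhat, x - xhat⟫ ≤ h x := by
  set c : ℝ := ⟪a - xhat, x - xhat⟫ with hc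
  set k : ℝ := ‖x - xhat‖ ^ 2 with hk
  have hs : (0:ℝ) < 1 / (2 * σ) := by positivity
  set s : ℝ := 1 / (2 * σ) with hsdef
  -- key inequality for each t ∈ (0,1]
  have key : ∀ t ∈ Set.Ioc (0:ℝ) 1, (2 * s) * c - t * (k * s) ≤ h x - h xhat := by
    intro t ht
    have ht0 : 0 < t := ht.1
    have ht1 : t ≤ 1 := ht.2
    have hz := hmin (xhat + t • (x - xhat))
    have hzconv : h (xhat + t • (x - xhat)) ≤ (1 - t) * h xhat + t * h x := by
      have := hconv.2 (Set.mem_univ xhat) (Set.mem_univ x)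
        (by linarith : (0:ℝ) ≤ 1 - t) ht0.le (by ring)
      have heq : (1 - t) • xhat + t • x = xhat + t • (x - xhat) := by
        rw [smul_sub, sub_smul, one_smul]; abel
      rwa [heq] at this
    have hnorm : ‖xhat + t • (x - xhat) - a‖ ^ 2
        = ‖xhat - a‖ ^ 2 + 2 * t * (-c) + t ^ 2 * k := by
      have heq : xhat + t • (x - xhat) - a = (xhat - a) + t • (x - xhat) := by abel
      rw [heq, norm_add_sq_real, real_inner_smul_right, norm_smul, Real.norm_eq_abs,
        mul_pow, sq_abs]
      have : ⟪xhat - a, x - xhat⟫ = -c := by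
        rw [hc, ← inner_neg_left]; congr 1; abel
      rw [this, hk]; ring
    rw [hnorm] at hz
    have hmain : 0 ≤ t * (h x - h xhat - 2 * s * c + t * k * s) := by nlinarith
    have hA : 0 ≤ h x - h xhat - 2 * s * c + t * k * s := by
      by_contra h'
      push_neg at h'
      nlinarith
    nlinarith
  -- take the limit t → 0⁺
  have htend : Filter.Tendsto (fun t : ℝ => (2 * s) * c - t * (k * s))
      (nhdsWithin 0 (Set.Ioi 0)) (nhds ((2 * s) * c)) := by
    have : Filter.Tendsto (fun t : ℝ => (2 * s) * c - t * (k * s)) (nhds 0)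
        (nhds ((2 * s) * c - 0 * (k * s))) := by
      exact tendsto_const_nhds.sub ((continuous_id.mul continuous_const).tendsto 0)
    simpa using this.mono_left nhdsWithin_le_nhds
  have hev : ∀ᶠ t in nhdsWithin (0:ℝ) (Set.Ioi 0),
      (2 * s) * c - t * (k * s) ≤ h x - h xhat := by
    filter_upwards [Ioc_mem_nhdsGT_of_mem (Set.left_mem_Ico.mpr one_pos)] with t ht
    exact key t ht
  have hlim : (2 * s) * c ≤ h x - h xhat := le_of_tendsto htend hev
  have hsc : 2 * s = 1 / σ := by rw [hsdef]; field_simp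
  rw [hsc] at hlim
  linarith

/-- Gradient inequality for convex functions. -/
lemma convex_grad_ineq (f : E → ℝ) (f' : E → E) (hconv : ConvexOn ℝ Set.univ f)
    (hdiff : ∀ x, HasGradientAt f (f' x) x) (x₀ x : E) :
    f x₀ + ⟪f' x₀, x - x₀⟫ ≤ f x := by
  set d : E := x - x₀ with hd
  set g : ℝ → ℝ := fun t => f (x₀ + t • d) with hg
  have hline : HasDerivAt (fun t : ℝ => x₀ + t • d) d 0 := by
    simpa using ((hasDerivAt_id (0:ℝ)).smul_const d).const_add x₀
  have hgder : HasDerivAt g ⟪f' x₀, d⟫ 0 := by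
    have := (hdiff (x₀ + (0:ℝ) • d)).hasFDerivAt.comp_hasDerivAt 0 hline
    simp [hg] at this; exact this
  have hslope := hasDerivAt_iff_tendsto_slope.mp hgder
  have hslope' : Filter.Tendsto (slope g 0) (nhdsWithin 0 (Set.Ioi 0))
      (nhds ⟪f' x₀, d⟫) :=
    hslope.mono_left (nhdsWithin_mono _ (fun t ht => Set.mem_compl_singleton_iff.mpr
      (ne_of_gt ht)))
  have hev : ∀ᶠ t in nhdsWithin (0:ℝ) (Set.Ioi 0), slope g 0 t ≤ f x - f x₀ := by
    filter_upwards [Ioc_mem_nhdsGT_of_mem (Set.left_mem_Ico.mpr one_pos)] with t ht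
    have ht0 : 0 < t := ht.1
    have hgt : g t ≤ (1 - t) * f x₀ + t * f x := by
      have := hconv.2 (Set.mem_univ x₀) (Set.mem_univ x)
        (by linarith [ht.2] : (0:ℝ) ≤ 1 - t) ht0.le (by ring)
      have heq : (1 - t) • x₀ + t • x = x₀ + t • d := by
        rw [hd, smul_sub, sub_smul, one_smul]; abel
      rwa [heq] at this
    have hg0 : g 0 = f x₀ := by simp [hg]
    rw [slope_def_field, hg0]
    simp only [sub_zero]
    rw [div_le_iff₀ ht0]
    nlinarith
  have hlim := le_of_tendsto hslope' hev
  linarith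

/-- Descent lemma for L-smooth functions. -/
lemma descent_lemma (f : E → ℝ) (f' : E → E) (L : ℝ) (hL : 0 < L)
    (hdiff : ∀ x, HasGradientAt f (f' x) x)
    (hlip : ∀ x y, ‖f' x - f' y‖ ≤ L * ‖x - y‖) (x y : E) :
    f y ≤ f x + ⟪f' x, y - x⟫ + L / 2 * ‖y - x‖ ^ 2 := by
  set d : E := y - x with hd
  set ψ : ℝ → ℝ := fun t => f (x + t • d) - t * ⟪f' x, d⟫ - L * t ^ 2 / 2 * ‖d‖ ^ 2
    with hψ
  have hψder : ∀ t : ℝ, HasDerivAt ψ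
      (⟪f' (x + t • d), d⟫ - ⟪f' x, d⟫ - L * t * ‖d‖ ^ 2) t := by
    intro t
    have hline : HasDerivAt (fun s : ℝ => x + s • d) d t := by
      simpa using ((hasDerivAt_id t).smul_const d).const_add x
    have h1 : HasDerivAt (fun s : ℝ => f (x + s • d)) ⟪f' (x + t • d), d⟫ t := by
      have := (hdiff (x + t • d)).hasFDerivAt.comp_hasDerivAt t hline
      simp at this; exact this
    have h2 : HasDerivAt (fun s : ℝ => s * ⟪f' x, d⟫) ⟪f' x, d⟫ t := by
      simpa using (hasDerivAt_id t).mul_const (⟪f' x, d⟫ : ℝ)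
    have h3 : HasDerivAt (fun s : ℝ => L * s ^ 2 / 2 * ‖d‖ ^ 2)
        (L * t * ‖d‖ ^ 2) t := by
      have hp : HasDerivAt (fun s : ℝ => s ^ 2) (2 * t) t := by
        simpa using hasDerivAt_pow 2 t
      have := ((hp.const_mul L).div_const 2).mul_const (‖d‖ ^ 2)
      rw [show L * t * ‖d‖ ^ 2 = L * (2 * t) / 2 * ‖d‖ ^ 2 by ring]
      exact this
    exact (h1.sub h2).sub h3
  have hψdiff : Differentiable ℝ ψ := fun t => (hψder t).differentiableAt
  have hanti : AntitoneOn ψ (Set.Icc 0 1) := by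
    apply antitoneOn_of_deriv_nonpos (convex_Icc 0 1) hψdiff.continuous.continuousOn
      (hψdiff.differentiableOn)
    intro t ht
    rw [interior_Icc] at ht
    rw [(hψder t).deriv]
    have h1 : ⟪f' (x + t • d) - f' x, d⟫ ≤ ‖f' (x + t • d) - f' x‖ * ‖d‖ :=
      real_inner_le_norm _ _
    have h2 : ‖f' (x + t • d) - f' x‖ ≤ L * ‖t • d‖ := by
      have := hlip (x + t • d) x
      simpa using this
    have h3 : ‖t • d‖ = t * ‖d‖ := by
      rw [norm_smul, Real.norm_eq_abs, abs_of_pos ht.1]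
    have h4 : ⟪f' (x + t • d) - f' x, d⟫ = ⟪f' (x + t • d), d⟫ - ⟪f' x, d⟫ :=
      inner_sub_left _ _ _
    have h5 : ‖f' (x + t • d) - f' x‖ * ‖d‖ ≤ L * (t * ‖d‖) * ‖d‖ := by
      rw [← h3]; exact mul_le_mul_of_nonneg_right h2 (norm_nonneg d)
    nlinarith [norm_nonneg d]
  have := hanti (Set.left_mem_Icc.mpr zero_le_one) (Set.right_mem_Icc.mpr zero_le_one)
    zero_le_one
  have hψ0 : ψ 0 = f x := by simp [hψ]
  have hψ1 : ψ 1 = f y - ⟪f' x, d⟫ - L / 2 * ‖d‖ ^ 2 := by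
    have hxy : x + (1:ℝ) • d = y := by rw [hd, one_smul]; abel
    simp only [hψ, hxy, one_pow, one_mul]
    ring
  rw [hψ0, hψ1] at this
  linarith

end Aux

theorem stmt_5 {E : Type*} [NormedAddCommGroup E] [InnerProductSpace ℝ E] [CompleteSpace E]
    (h f₁ : E → ℝ) (f₁' : E → E) (L : ℝ) (hL : 0 < L)
    (hconv : ConvexOn ℝ Set.univ h)
    (hf₁conv : ConvexOn ℝ Set.univ f₁)
    (hf₁diff : ∀ x, HasGradientAt f₁ (f₁' x) x)
    (hf₁lip : ∀ x y, ‖f₁' x - f₁' y‖ ≤ L * ‖x - y‖)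
    (σ : ℝ) (hσ : 0 < σ) (x₀ y₀ y₁ xhat : E)
    (hmin : ∀ x : E,
      h xhat + 1 / (2 * σ) * ‖xhat - (x₀ - σ • (y₀ + f₁' x₀))‖ ^ 2 ≤
      h x + 1 / (2 * σ) * ‖x - (x₀ - σ • (y₀ + f₁' x₀))‖ ^ 2) :
    ∀ x : E,
      ⟪x - xhat, (y₁ - y₀) + (1 / σ) • (x₀ - xhat)⟫ - L / 2 * ‖xhat - x₀‖ ^ 2 ≤
      h x + f₁ x - h xhat - f₁ xhat + ⟪x - xhat, y₁⟫ := by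
  intro x
  have hA := prox_subgrad h hconv σ hσ (x₀ - σ • (y₀ + f₁' x₀)) xhat hmin x
  have hB := convex_grad_ineq f₁ f₁' hf₁conv hf₁diff x₀ x
  have hC := descent_lemma f₁ f₁' L hL hf₁diff hf₁lip x₀ xhat
  have hCnorm : ‖xhat - x₀‖ ^ 2 = ‖xhat - x₀‖ ^ 2 := rfl
  have hinner : (1 / σ) * ⟪x₀ - σ • (y₀ + f₁' x₀) - xhat, x - xhat⟫
      + ⟪f₁' x₀, x - x₀⟫ - ⟪f₁' x₀, xhat - x₀⟫ + ⟪x - xhat, y₁⟫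
      = ⟪x - xhat, (y₁ - y₀) + (1 / σ) • (x₀ - xhat)⟫ := by
    simp only [inner_sub_left, inner_sub_right, inner_add_left, inner_add_right,
      inner_smul_left, inner_smul_right, RCLike.conj_to_real]
    rw [real_inner_comm x y₀, real_inner_comm xhat y₀, real_inner_comm x x₀,
      real_inner_comm xhat x₀, real_inner_comm x xhat]
    field_simp
    ring
  linarith
end

section
/- (Theorem 6(ii), O(1/N) ergodic rate of the inexact fair primal dual method, Condat–Vũ case.) Let E be a real inner product space, f₁ : E → ℝ convex and differentiable with L-Lipschitz continuous gradient (L > 0), h : E → ℝ and φ : E → ℝ convex, σ, τ > 0 with στ < 1 − σL, and let (ε_k)_{k≥1} be a nonnegative summable sequence. Given x⁰, y⁰ ∈ E, define for k ≥ 0: x̂ᵏ⁺¹ minimizes x ↦ h(x) + (1/(2σ))‖x − (xᵏ − σ(yᵏ + ∇f₁(xᵏ)))‖²; yᵏ⁺¹ minimizes y ↦ φ(y) + (1/(2τ))‖y − (yᵏ + τ(2x̂ᵏ⁺¹ − xᵏ)) − dᵏ⁺¹‖² where the error vectors satisfy ‖dᵏ⁺¹‖ ≤ ε_{k+1} / max{1,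 ‖yᵏ⁺¹‖}; and xᵏ⁺¹ := x̂ᵏ⁺¹. Let (x*, y*) be a saddle point of L(x,y) = f₁(x) + h(x) + ⟨x,y⟩ − φ(y), and set x̄_N := (1/N)·Σ_{k=1}^{N} x̂ᵏ, ȳ_N := (1/N)·Σ_{k=1}^{N} yᵏ. Then for all N ≥ 1: [f₁(x̄_N) + h(x̄_N) + φ(ȳ_N)] − [f₁(x*) + h(x*) + φ(y*)] − (⟨x* − x̄_N, y*⟩ − ⟨y* − ȳ_N, x*⟩) ≤ (1/N)·[ (1/2)((1/σ)‖x⁰ − x*‖² − 2⟨x⁰ − x*, y⁰ − y*⟩ + (1/τ)‖y⁰ − y*‖²) + (1/τ)(1 + ‖y*‖)·Σ_{k=1}^{∞} ε_k ]. -/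
open RealInnerProductSpace

section Aux
variable {E : Type*} [NormedAddCommGroup E] [InnerProductSpace ℝ E]

private lemma IFPD_small_aux (A K : ℝ) (hK : 0 ≤ K)
    (h : ∀ t : ℝ, 0 < t → t ≤ 1 → A ≤ t * K) : A ≤ 0 := by
  by_contra hlt
  push_neg at hlt
  have ht0 : (0:ℝ) < min 1 (A / (2 * (K + 1))) := by positivity
  have h1 := h _ ht0 (min_le_left _ _)
  have h2 : min 1 (A / (2 * (K + 1))) * K ≤ (A / (2 * (K + 1))) * K :=
    mul_le_mul_of_nonneg_right (min_le_right _ _) hK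
  have h3 : (A / (2 * (K + 1))) * K < A := by
    rw [div_mul_eq_mul_div, div_lt_iff₀ (by linarith)]
    nlinarith
  linarith

private lemma IFPD_prox_lin (g : E → ℝ) (hg : ConvexOn ℝ Set.univ g) (σ : ℝ) (hσ : 0 < σ)
    (p a : E)
    (hmin : ∀ z, g p + 1 / (2 * σ) * ‖p - a‖ ^ 2 ≤ g z + 1 / (2 * σ) * ‖z - a‖ ^ 2) :
    ∀ z, g p ≤ g z + (1 / σ) * ⟪p - a, z - p⟫ := by
  intro z
  set c : ℝ := ⟪p - a, z - p⟫ with hc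
  set K : ℝ := 1 / (2 * σ) * ‖z - p‖ ^ 2 with hK
  have hKnn : 0 ≤ K := by positivity
  have key : ∀ t : ℝ, 0 < t → t ≤ 1 → g p - g z - (1 / σ) * c ≤ t * K := by
    intro t ht ht1
    have hmem := hmin (p + t • (z - p))
    have hconv := hg.2 (Set.mem_univ p) (Set.mem_univ z)
      (by linarith : (0:ℝ) ≤ 1 - t) ht.le (by ring)
    have heq : (1 - t) • p + t • z = p + t • (z - p) := by
      rw [sub_smul, one_smul, smul_sub]; abel
    rw [heq] at hconv
    simp only [smul_eq_mul] at hconv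
    have hnorm : ‖p + t • (z - p) - a‖ ^ 2
        = ‖p - a‖ ^ 2 + 2 * t * c + t ^ 2 * ‖z - p‖ ^ 2 := by
      have h1 : p + t • (z - p) - a = (p - a) + t • (z - p) := by abel
      rw [h1, norm_add_sq_real, real_inner_smul_right, norm_smul, mul_pow]
      simp only [Real.norm_eq_abs, sq_abs]
      ring
    rw [hnorm] at hmem
    have e1 : 1 / (2 * σ) * (‖p - a‖ ^ 2 + 2 * t * c + t ^ 2 * ‖z - p‖ ^ 2)
        = 1 / (2 * σ) * ‖p - a‖ ^ 2 + t * ((1 / σ) * c) + t * (t * K) := by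
      rw [hK]; field_simp
    have h2 : t * (g p - g z - (1 / σ) * c) ≤ t * (t * K) := by nlinarith
    have h3 := (mul_le_mul_iff_right₀ ht).mp h2
    nlinarith
  have := IFPD_small_aux _ _ hKnn key
  linarith

private lemma IFPD_polar_id (p q r : E) :
    2 * ⟪p - q, r - p⟫ = ‖q - r‖ ^ 2 - ‖p - r‖ ^ 2 - ‖p - q‖ ^ 2 := by
  have h := norm_add_sq_real (p - q) (r - p)
  rw [show p - q + (r - p) = r - q by abel] at h
  rw [norm_sub_rev r q, norm_sub_rev r p] at h
  linarith

private lemma IFPD_key_alg (σ τ L : ℝ) (hσ : 0 < σ) (hτ : 0 < τ) (hL : 0 ≤ L)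
    (hcond : σ * τ < 1 - σ * L) (xk xh yk yp xs ys : E) :
    (1 / σ) * ⟪xh - xk, xs - xh⟫ + ⟪yk, xs - xh⟫ + L / 2 * ‖xh - xk‖ ^ 2
      + (1 / τ) * ⟪yp - yk, ys - yp⟫ - ⟪2 • xh - xk, ys - yp⟫ + ⟪xh, ys⟫ - ⟪xs, yp⟫
    ≤ (1 / (2 * σ) * ‖xk - xs‖ ^ 2 - ⟪xk - xs, yk - ys⟫ + 1 / (2 * τ) * ‖yk - ys‖ ^ 2)
      - (1 / (2 * σ) * ‖xh - xs‖ ^ 2 - ⟪xh - xs, yp - ys⟫ + 1 / (2 * τ) * ‖yp - ys‖ ^ 2) := by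
  have id1 : (1 / σ) * ⟪xh - xk, xs - xh⟫
      = 1 / (2 * σ) * ‖xk - xs‖ ^ 2 - 1 / (2 * σ) * ‖xh - xs‖ ^ 2
        - 1 / (2 * σ) * ‖xh - xk‖ ^ 2 := by
    have h := IFPD_polar_id xh xk xs
    linear_combination (1 / (2 * σ)) * h
  have id2 : (1 / τ) * ⟪yp - yk, ys - yp⟫
      = 1 / (2 * τ) * ‖yk - ys‖ ^ 2 - 1 / (2 * τ) * ‖yp - ys‖ ^ 2
        - 1 / (2 * τ) * ‖yp - yk‖ ^ 2 := by
    have h := IFPD_polar_id yp yk ys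
    linear_combination (1 / (2 * τ)) * h
  have id3 : ⟪yk, xs - xh⟫ - ⟪2 • xh - xk, ys - yp⟫ + ⟪xh, ys⟫ - ⟪xs, yp⟫
      = -⟪xk - xs, yk - ys⟫ + ⟪xh - xs, yp - ys⟫ + ⟪xk - xh, yk - yp⟫ := by
    simp only [inner_sub_left, inner_sub_right, two_smul, inner_add_left]
    linarith [real_inner_comm yk xs, real_inner_comm yk xh, real_inner_comm yk xk,
      real_inner_comm xs ys, real_inner_comm xk ys, real_inner_comm xh ys,
      real_inner_comm xk yk, real_inner_comm xh yk, real_inner_comm xs yk,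
      real_inner_comm xk yp, real_inner_comm xh yp, real_inner_comm xs yp]
  have hCS : ⟪xk - xh, yk - yp⟫
      ≤ 1 / (2 * σ) * ‖xh - xk‖ ^ 2 - L / 2 * ‖xh - xk‖ ^ 2
        + 1 / (2 * τ) * ‖yp - yk‖ ^ 2 := by
    have h1 : ⟪xk - xh, yk - yp⟫ ≤ ‖xh - xk‖ * ‖yp - yk‖ := by
      calc ⟪xk - xh, yk - yp⟫ ≤ ‖xk - xh‖ * ‖yk - yp‖ := real_inner_le_norm _ _
        _ = ‖xh - xk‖ * ‖yp - yk‖ := by rw [norm_sub_rev, norm_sub_rev yk yp]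
    have h2 : ‖xh - xk‖ * ‖yp - yk‖
        ≤ τ / 2 * ‖xh - xk‖ ^ 2 + 1 / (2 * τ) * ‖yp - yk‖ ^ 2 := by
      have h3 : τ / 2 * ‖xh - xk‖ ^ 2 + 1 / (2 * τ) * ‖yp - yk‖ ^ 2
          - ‖xh - xk‖ * ‖yp - yk‖
          = (τ * ‖xh - xk‖ - ‖yp - yk‖) ^ 2 / (2 * τ) := by
        field_simp
        ring
      nlinarith [div_nonneg (sq_nonneg (τ * ‖xh - xk‖ - ‖yp - yk‖))
        (by linarith : (0:ℝ) ≤ 2 * τ)]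
    have h4 : 0 ≤ (1 / (2 * σ) - L / 2 - τ / 2) * ‖xh - xk‖ ^ 2 := by
      apply mul_nonneg _ (sq_nonneg _)
      have h5 : (1 - σ * L - σ * τ) / (2 * σ) = 1 / (2 * σ) - L / 2 - τ / 2 := by
        field_simp
      rw [← h5]
      apply div_nonneg (by linarith) (by linarith)
    nlinarith [h1, h2, h4]
  linarith [id1, id2, id3, hCS]

end Aux

private lemma IFPD_V_nonneg (σ τ : ℝ) (hσ : 0 < σ) (hτ : 0 < τ) (hστ : σ * τ < 1)
    (a b p : ℝ) (hp : p ≤ a * b) :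
    0 ≤ 1 / (2 * σ) * a ^ 2 - p + 1 / (2 * τ) * b ^ 2 := by
  have hfs : 1 / (2 * σ) * a ^ 2 + 1 / (2 * τ) * b ^ 2 - a * b
      = (τ * a ^ 2 + σ * b ^ 2 - 2 * σ * τ * (a * b)) / (2 * σ * τ) := by
    field_simp
  have hnum : 0 ≤ τ * a ^ 2 + σ * b ^ 2 - 2 * σ * τ * (a * b) := by
    nlinarith [mul_nonneg hτ.le (sq_nonneg (a - σ * b)),
      mul_nonneg (mul_nonneg hσ.le (sq_nonneg b)) (by linarith : (0:ℝ) ≤ 1 - σ * τ)]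
  have := div_nonneg hnum (by positivity : (0:ℝ) ≤ 2 * σ * τ)
  linarith

section Aux2
variable {E : Type*} [NormedAddCommGroup E] [InnerProductSpace ℝ E] [CompleteSpace E]

private lemma IFPD_line_hasDerivAt (f : E → ℝ) (f' : E → E)
    (hdiff : ∀ x, HasGradientAt f (f' x) x) (c v : E) (t : ℝ) :
    HasDerivAt (fun s : ℝ => f (c + s • v)) ⟪f' (c + t • v), v⟫ t := by
  have hline : HasDerivAt (fun s : ℝ => c + s • v) v t := by
    simpa using ((hasDerivAt_id t).smul_const v).const_add c
  have h1 := (hdiff (c + t • v)).hasFDerivAt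
  have h2 := h1.comp_hasDerivAt t hline
  simp [InnerProductSpace.toDual_apply_apply] at h2
  exact h2

private lemma IFPD_convex_grad (f : E → ℝ) (f' : E → E) (hconv : ConvexOn ℝ Set.univ f)
    (hdiff : ∀ x, HasGradientAt f (f' x) x) (a z : E) :
    f a + ⟪f' a, z - a⟫ ≤ f z := by
  set v : E := z - a with hv
  have hD : HasDerivAt (fun s : ℝ => f (a + s • v)) ⟪f' a, v⟫ 0 := by
    have := IFPD_line_hasDerivAt f f' hdiff a v 0
    simpa using this
  have hslope := hasDerivAt_iff_tendsto_slope.mp hD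
  have hslope' : Filter.Tendsto (slope (fun s : ℝ => f (a + s • v)) 0)
      (nhdsWithin 0 (Set.Ioi 0)) (nhds ⟪f' a, v⟫) :=
    hslope.mono_left (nhdsWithin_mono 0 (fun t ht => ne_of_gt ht))
  have hle : ∀ᶠ t in nhdsWithin (0:ℝ) (Set.Ioi 0),
      slope (fun s : ℝ => f (a + s • v)) 0 t ≤ f z - f a := by
    filter_upwards [Ioc_mem_nhdsGT (by norm_num : (0:ℝ) < 1)] with t ht
    obtain ⟨ht0, ht1⟩ := ht
    have hconvt := hconv.2 (Set.mem_univ a) (Set.mem_univ z)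
      (by linarith : (0:ℝ) ≤ 1 - t) ht0.le (by ring)
    simp only [smul_eq_mul] at hconvt
    have heq : (1 - t) • a + t • z = a + t • v := by
      rw [hv, sub_smul, one_smul, smul_sub]; abel
    rw [heq] at hconvt
    rw [slope_def_field]
    simp only [sub_zero, zero_smul, add_zero]
    rw [div_le_iff₀ ht0]
    nlinarith
  have hlim := le_of_tendsto hslope' hle
  linarith

private lemma IFPD_descent (f : E → ℝ) (f' : E → E) (L : ℝ)
    (hdiff : ∀ x, HasGradientAt f (f' x) x)
    (hlip : ∀ x y, ‖f' x - f' y‖ ≤ L * ‖x - y‖) (a b : E) :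
    f b ≤ f a + ⟪f' a, b - a⟫ + L / 2 * ‖b - a‖ ^ 2 := by
  set v : E := b - a with hv
  set g : ℝ → ℝ := fun t => f (a + t • v) - (t * ⟪f' a, v⟫ + L * ‖v‖ ^ 2 * t ^ 2 / 2)
    with hg
  have hg' : ∀ t : ℝ, HasDerivAt g
      (⟪f' (a + t • v), v⟫ - (⟪f' a, v⟫ + L * ‖v‖ ^ 2 * t)) t := by
    intro t
    have h1 := IFPD_line_hasDerivAt f f' hdiff a v t
    have h2 : HasDerivAt (fun t : ℝ => t * ⟪f' a, v⟫ + L * ‖v‖ ^ 2 * t ^ 2 / 2)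
        (⟪f' a, v⟫ + L * ‖v‖ ^ 2 * t) t := by
      have ha : HasDerivAt (fun t : ℝ => t * ⟪f' a, v⟫) ⟪f' a, v⟫ t := by
        simpa using (hasDerivAt_id t).mul_const ⟪f' a, v⟫
      have hb : HasDerivAt (fun t : ℝ => L * ‖v‖ ^ 2 * t ^ 2 / 2)
          (L * ‖v‖ ^ 2 * t) t := by
        have := ((hasDerivAt_pow 2 t).const_mul (L * ‖v‖ ^ 2)).div_const 2
        exact this.congr_deriv (by norm_num; ring)
      exact ha.add hb
    exact h1.sub h2
  have hanti : AntitoneOn g (Set.Icc 0 1) := by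
    apply antitoneOn_of_deriv_nonpos (convex_Icc 0 1)
    · exact fun t _ => ((hg' t).continuousAt).continuousWithinAt
    · intro t _
      exact ((hg' t).differentiableAt).differentiableWithinAt
    · intro t ht
      rw [interior_Icc] at ht
      rw [(hg' t).deriv]
      have hcs : ⟪f' (a + t • v) - f' a, v⟫ ≤ ‖f' (a + t • v) - f' a‖ * ‖v‖ :=
        real_inner_le_norm _ _
      have hlipt : ‖f' (a + t • v) - f' a‖ ≤ L * (t * ‖v‖) := by
        have := hlip (a + t • v) a
        simpa [norm_smul, Real.norm_eq_abs, abs_of_pos ht.1] using this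
      have h3 : ⟪f' (a + t • v) - f' a, v⟫ ≤ L * ‖v‖ ^ 2 * t := by
        calc ⟪f' (a + t • v) - f' a, v⟫ ≤ ‖f' (a + t • v) - f' a‖ * ‖v‖ := hcs
          _ ≤ L * (t * ‖v‖) * ‖v‖ :=
              mul_le_mul_of_nonneg_right hlipt (norm_nonneg _)
          _ = L * ‖v‖ ^ 2 * t := by ring
      rw [inner_sub_left] at h3
      linarith
  have h01 := hanti (by norm_num : (0:ℝ) ∈ Set.Icc (0:ℝ) 1)
    (by norm_num : (1:ℝ) ∈ Set.Icc (0:ℝ) 1) (by norm_num)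
  simp only [hg, zero_smul, add_zero, one_smul] at h01
  have heq : a + v = b := by rw [hv]; abel
  rw [heq] at h01
  nlinarith [h01]

end Aux2

set_option maxHeartbeats 1000000 in
theorem stmt_17 {E : Type*} [NormedAddCommGroup E] [InnerProductSpace ℝ E] [CompleteSpace E]
    (f₁ h φ : E → ℝ) (f₁' : E → E) (L : ℝ) (hL : 0 < L)
    (hf₁conv : ConvexOn ℝ Set.univ f₁)
    (hf₁diff : ∀ x, HasGradientAt f₁ (f₁' x) x)
    (hf₁lip : ∀ x y, ‖f₁' x - f₁' y‖ ≤ L * ‖x - y‖)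
    (hhconv : ConvexOn ℝ Set.univ h)
    (hφconv : ConvexOn ℝ Set.univ φ)
    (σ τ : ℝ) (hσ : 0 < σ) (hτ : 0 < τ) (hcond : σ * τ < 1 - σ * L)
    (ε : ℕ → ℝ) (hεnonneg : ∀ k, 0 ≤ ε k) (hεsum : Summable ε)
    (x y xhat d : ℕ → E)
    (hxhat : ∀ k, ∀ z : E,
      h (xhat (k + 1)) +
          1 / (2 * σ) * ‖xhat (k + 1) - (x k - σ • (y k + f₁' (x k)))‖ ^ 2 ≤
      h z + 1 / (2 * σ) * ‖z - (x k - σ • (y k + f₁' (x k)))‖ ^ 2)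
    (hy : ∀ k, ∀ w : E,
      φ (y (k + 1)) +
          1 / (2 * τ) *
            ‖y (k + 1) - (y k + τ • (2 • xhat (k + 1) - x k)) - d (k + 1)‖ ^ 2 ≤
      φ w + 1 / (2 * τ) * ‖w - (y k + τ • (2 • xhat (k + 1) - x k)) - d (k + 1)‖ ^ 2)
    (hd : ∀ k, ‖d (k + 1)‖ ≤ ε (k + 1) / max 1 ‖y (k + 1)‖)
    (hx : ∀ k, x (k + 1) = xhat (k + 1))
    (xs ys : E)
    (hsaddle : ∀ a b : E,
      f₁ xs + h xs + ⟪xs, b⟫ - φ b ≤ f₁ xs + h xs + ⟪xs, ys⟫ - φ ys ∧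
      f₁ xs + h xs + ⟪xs, ys⟫ - φ ys ≤ f₁ a + h a + ⟪a, ys⟫ - φ ys) :
    ∀ N : ℕ, 1 ≤ N →
      (f₁ ((N : ℝ)⁻¹ • ∑ k ∈ Finset.Icc 1 N, xhat k)
          + h ((N : ℝ)⁻¹ • ∑ k ∈ Finset.Icc 1 N, xhat k)
          + φ ((N : ℝ)⁻¹ • ∑ k ∈ Finset.Icc 1 N, y k))
        - (f₁ xs + h xs + φ ys)
        - (⟪xs - (N : ℝ)⁻¹ • ∑ k ∈ Finset.Icc 1 N, xhat k, ys⟫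
            - ⟪ys - (N : ℝ)⁻¹ • ∑ k ∈ Finset.Icc 1 N, y k, xs⟫) ≤
      (1 / N) *
        (1 / 2 *
            ((1 / σ) * ‖x 0 - xs‖ ^ 2 - 2 * ⟪x 0 - xs, y 0 - ys⟫
              + (1 / τ) * ‖y 0 - ys‖ ^ 2)
          + (1 / τ) * (1 + ‖ys‖) * ∑' k : ℕ, ε (k + 1)) := by
  intro N hN
  have hNR : (0:ℝ) < (N:ℝ) := by exact_mod_cast Nat.lt_of_lt_of_le Nat.zero_lt_one hN
  obtain ⟨V, hV⟩ : ∃ v : ℕ → ℝ, v = fun k =>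
      1 / (2 * σ) * ‖x k - xs‖ ^ 2 - ⟪x k - xs, y k - ys⟫
        + 1 / (2 * τ) * ‖y k - ys‖ ^ 2 := ⟨_, rfl⟩
  obtain ⟨Gt, hGt⟩ : ∃ g : ℕ → ℝ, g = fun j =>
      (f₁ (xhat j) + h (xhat j) + ⟪xhat j, ys⟫ - φ ys)
        - (f₁ xs + h xs + ⟪xs, y j⟫ - φ (y j)) := ⟨_, rfl⟩
  -- per-iteration inequality
  have key : ∀ k, Gt (k + 1) ≤ V k - V (k + 1) + (1 / τ) * (1 + ‖ys‖) * ε (k + 1) := by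
    intro k
    -- primal prox inequality
    have hP0 := IFPD_prox_lin h hhconv σ hσ (xhat (k + 1))
      (x k - σ • (y k + f₁' (x k))) (hxhat k) xs
    have e1 : xhat (k + 1) - (x k - σ • (y k + f₁' (x k)))
        = (xhat (k + 1) - x k) + σ • (y k) + σ • (f₁' (x k)) := by
      rw [smul_add]; abel
    have e2 : ⟪xhat (k + 1) - (x k - σ • (y k + f₁' (x k))), xs - xhat (k + 1)⟫
        = ⟪xhat (k + 1) - x k, xs - xhat (k + 1)⟫
          + σ * ⟪y k, xs - xhat (k + 1)⟫ + σ * ⟪f₁' (x k), xs - xhat (k + 1)⟫ := by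
      rw [e1, inner_add_left, inner_add_left, real_inner_smul_left, real_inner_smul_left]
    rw [e2] at hP0
    have e3 : (1 / σ) * (⟪xhat (k + 1) - x k, xs - xhat (k + 1)⟫
          + σ * ⟪y k, xs - xhat (k + 1)⟫ + σ * ⟪f₁' (x k), xs - xhat (k + 1)⟫)
        = (1 / σ) * ⟪xhat (k + 1) - x k, xs - xhat (k + 1)⟫
          + ⟪y k, xs - xhat (k + 1)⟫ + ⟪f₁' (x k), xs - xhat (k + 1)⟫ := by
      field_simp
    rw [e3] at hP0
    -- dual prox inequality
    have hD0 := IFPD_prox_lin φ hφconv τ hτ (y (k + 1))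
      (y k + τ • (2 • xhat (k + 1) - x k) + d (k + 1))
      (fun w => by
        have hw := hy k w
        simp only [sub_sub] at hw
        exact hw) ys
    have e4 : y (k + 1) - (y k + τ • (2 • xhat (k + 1) - x k) + d (k + 1))
        = (y (k + 1) - y k) - τ • (2 • xhat (k + 1) - x k) - d (k + 1) := by
      abel
    have e5 : ⟪y (k + 1) - (y k + τ • (2 • xhat (k + 1) - x k) + d (k + 1)),
          ys - y (k + 1)⟫
        = ⟪y (k + 1) - y k, ys - y (k + 1)⟫
          - τ * ⟪2 • xhat (k + 1) - x k, ys - y (k + 1)⟫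
          - ⟪d (k + 1), ys - y (k + 1)⟫ := by
      rw [e4, inner_sub_left, inner_sub_left, real_inner_smul_left]
    rw [e5] at hD0
    have e6 : (1 / τ) * (⟪y (k + 1) - y k, ys - y (k + 1)⟫
          - τ * ⟪2 • xhat (k + 1) - x k, ys - y (k + 1)⟫
          - ⟪d (k + 1), ys - y (k + 1)⟫)
        = (1 / τ) * ⟪y (k + 1) - y k, ys - y (k + 1)⟫
          - ⟪2 • xhat (k + 1) - x k, ys - y (k + 1)⟫
          - (1 / τ) * ⟪d (k + 1), ys - y (k + 1)⟫ := by
      field_simp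
      try ring
    rw [e6] at hD0
    -- smoothness and convexity of f₁
    have hF1 := IFPD_descent f₁ f₁' L hf₁diff hf₁lip (x k) (xhat (k + 1))
    have hF2 := IFPD_convex_grad f₁ f₁' hf₁conv hf₁diff (x k) xs
    have eF : ⟪f₁' (x k), xs - xhat (k + 1)⟫ + ⟪f₁' (x k), xhat (k + 1) - x k⟫
        = ⟪f₁' (x k), xs - x k⟫ := by
      rw [← inner_add_right]
      congr 1
      abel
    -- error term
    have herr : -((1 / τ) * ⟪d (k + 1), ys - y (k + 1)⟫)
        ≤ (1 / τ) * (1 + ‖ys‖) * ε (k + 1) := by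
      set M : ℝ := max 1 ‖y (k + 1)‖ with hM
      have hM1 : (1:ℝ) ≤ M := le_max_left _ _
      have hMy : ‖y (k + 1)‖ ≤ M := le_max_right _ _
      have hM0 : (0:ℝ) < M := by linarith
      have h1 : -⟪d (k + 1), ys - y (k + 1)⟫ = ⟪d (k + 1), y (k + 1) - ys⟫ := by
        rw [← inner_neg_right]
        congr 1
        abel
      have h2 : ⟪d (k + 1), y (k + 1) - ys⟫ ≤ ‖d (k + 1)‖ * ‖y (k + 1) - ys‖ :=
        real_inner_le_norm _ _
      have h3 : ‖y (k + 1) - ys‖ ≤ ‖y (k + 1)‖ + ‖ys‖ := norm_sub_le _ _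
      have h4 : ‖d (k + 1)‖ * ‖y (k + 1) - ys‖
          ≤ (ε (k + 1) / M) * (‖y (k + 1)‖ + ‖ys‖) := by
        apply mul_le_mul (hd k) h3 (norm_nonneg _)
        exact div_nonneg (hεnonneg _) hM0.le
      have h5 : (ε (k + 1) / M) * ‖y (k + 1)‖ ≤ ε (k + 1) := by
        have := mul_le_mul_of_nonneg_left hMy (div_nonneg (hεnonneg (k + 1)) hM0.le)
        calc (ε (k + 1) / M) * ‖y (k + 1)‖ ≤ (ε (k + 1) / M) * M := this
          _ = ε (k + 1) := div_mul_cancel₀ _ (ne_of_gt hM0)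
      have h6 : (ε (k + 1) / M) * ‖ys‖ ≤ ε (k + 1) * ‖ys‖ :=
        mul_le_mul_of_nonneg_right (div_le_self (hεnonneg _) hM1) (norm_nonneg _)
      have h7 : ⟪d (k + 1), y (k + 1) - ys⟫ ≤ ε (k + 1) * (1 + ‖ys‖) := by
        nlinarith [h2, h4, h5, h6]
      have h8 : (0:ℝ) ≤ 1 / τ := by positivity
      calc -((1 / τ) * ⟪d (k + 1), ys - y (k + 1)⟫)
          = (1 / τ) * ⟪d (k + 1), y (k + 1) - ys⟫ := by rw [← h1]; ring
        _ ≤ (1 / τ) * (ε (k + 1) * (1 + ‖ys‖)) := mul_le_mul_of_nonneg_left h7 h8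
        _ = (1 / τ) * (1 + ‖ys‖) * ε (k + 1) := by ring
    -- algebraic core
    have halg := IFPD_key_alg σ τ L hσ hτ hL.le hcond (x k) (xhat (k + 1)) (y k)
      (y (k + 1)) xs ys
    simp only [hV, hGt]
    rw [hx k]
    linarith [hP0, hD0, hF1, hF2, eF, herr, halg]
  -- nonnegativity of V
  have hστ1 : σ * τ < 1 := by nlinarith [mul_pos hσ hL]
  have hVnn : ∀ k, 0 ≤ V k := by
    intro k
    simp only [hV]
    exact IFPD_V_nonneg σ τ hσ hτ hστ1 ‖x k - xs‖ ‖y k - ys‖ _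
      (real_inner_le_norm _ _)
  -- summing up
  have hsumε : Summable (fun k : ℕ => ε (k + 1)) := (summable_nat_add_iff 1).2 hεsum
  have ht3 : ∑ k ∈ Finset.range N, ε (k + 1) ≤ ∑' k : ℕ, ε (k + 1) :=
    Summable.sum_le_tsum _ (fun i _ => hεnonneg _) hsumε
  have sumG : ∑ k ∈ Finset.range N, Gt (k + 1)
      ≤ V 0 + (1 / τ) * (1 + ‖ys‖) * ∑' k : ℕ, ε (k + 1) := by
    have t1 : ∑ k ∈ Finset.range N, Gt (k + 1)
        ≤ ∑ k ∈ Finset.range N, (V k - V (k + 1) + (1 / τ) * (1 + ‖ys‖) * ε (k + 1)) :=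
      Finset.sum_le_sum (fun k _ => key k)
    have t2 : ∑ k ∈ Finset.range N, (V k - V (k + 1) + (1 / τ) * (1 + ‖ys‖) * ε (k + 1))
        = (V 0 - V N) + (1 / τ) * (1 + ‖ys‖) * ∑ k ∈ Finset.range N, ε (k + 1) := by
      rw [Finset.sum_add_distrib, Finset.sum_range_sub' V N, ← Finset.mul_sum]
    have t4 : (1 / τ) * (1 + ‖ys‖) * ∑ k ∈ Finset.range N, ε (k + 1)
        ≤ (1 / τ) * (1 + ‖ys‖) * ∑' k : ℕ, ε (k + 1) := by
      apply mul_le_mul_of_nonneg_left ht3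
      positivity
    linarith [t1, hVnn N, t2, t4]
  -- reindex the sum
  have hreindex : ∑ j ∈ Finset.Icc 1 N, Gt j = ∑ k ∈ Finset.range N, Gt (k + 1) := by
    rw [show Finset.Icc 1 N = Finset.Ico 1 (N + 1) by rw [Finset.Ico_add_one_right_eq_Icc],
      Finset.sum_Ico_eq_sum_range]
    simp [add_comm]
  -- Jensen step
  have hNne : (N:ℝ) ≠ 0 := ne_of_gt hNR
  have hwsum : ∑ _j ∈ Finset.Icc 1 N, (N:ℝ)⁻¹ = 1 := by
    rw [Finset.sum_const, Nat.card_Icc]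
    simp only [Nat.add_sub_cancel, nsmul_eq_mul]
    field_simp
  have hwnn : ∀ j ∈ Finset.Icc 1 N, (0:ℝ) ≤ (N:ℝ)⁻¹ := fun j _ => by positivity
  have hxbar : (N : ℝ)⁻¹ • ∑ k ∈ Finset.Icc 1 N, xhat k
      = ∑ k ∈ Finset.Icc 1 N, (N:ℝ)⁻¹ • xhat k := Finset.smul_sum
  have hybar : (N : ℝ)⁻¹ • ∑ k ∈ Finset.Icc 1 N, y k
      = ∑ k ∈ Finset.Icc 1 N, (N:ℝ)⁻¹ • y k := Finset.smul_sum
  have hfh : ConvexOn ℝ Set.univ (fun z => f₁ z + h z) := hf₁conv.add hhconv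
  have J1 : f₁ ((N : ℝ)⁻¹ • ∑ k ∈ Finset.Icc 1 N, xhat k)
        + h ((N : ℝ)⁻¹ • ∑ k ∈ Finset.Icc 1 N, xhat k)
      ≤ ∑ j ∈ Finset.Icc 1 N, (N:ℝ)⁻¹ * (f₁ (xhat j) + h (xhat j)) := by
    have := hfh.map_sum_le hwnn hwsum (fun j _ => Set.mem_univ (xhat j))
    rw [← hxbar] at this
    exact this
  have J2 : φ ((N : ℝ)⁻¹ • ∑ k ∈ Finset.Icc 1 N, y k)
      ≤ ∑ j ∈ Finset.Icc 1 N, (N:ℝ)⁻¹ * φ (y j) := by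
    have := hφconv.map_sum_le hwnn hwsum (fun j _ => Set.mem_univ (y j))
    rw [← hybar] at this
    exact this
  have I1 : ⟪(N : ℝ)⁻¹ • ∑ k ∈ Finset.Icc 1 N, xhat k, ys⟫
      = ∑ j ∈ Finset.Icc 1 N, (N:ℝ)⁻¹ * ⟪xhat j, ys⟫ := by
    rw [real_inner_smul_left, sum_inner, Finset.mul_sum]
  have I2 : ⟪xs, (N : ℝ)⁻¹ • ∑ k ∈ Finset.Icc 1 N, y k⟫
      = ∑ j ∈ Finset.Icc 1 N, (N:ℝ)⁻¹ * ⟪xs, y j⟫ := by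
    rw [real_inner_smul_right, inner_sum, Finset.mul_sum]
  have hsplit : ∑ j ∈ Finset.Icc 1 N, (N:ℝ)⁻¹ * Gt j
      = (∑ j ∈ Finset.Icc 1 N, (N:ℝ)⁻¹ * (f₁ (xhat j) + h (xhat j)))
        + (∑ j ∈ Finset.Icc 1 N, (N:ℝ)⁻¹ * ⟪xhat j, ys⟫)
        + (∑ j ∈ Finset.Icc 1 N, (N:ℝ)⁻¹ * φ (y j))
        - (∑ j ∈ Finset.Icc 1 N, (N:ℝ)⁻¹ * ⟪xs, y j⟫)
        - (f₁ xs + h xs + φ ys) := by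
    have hterm : ∀ j ∈ Finset.Icc 1 N, (N:ℝ)⁻¹ * Gt j
        = (N:ℝ)⁻¹ * (f₁ (xhat j) + h (xhat j)) + (N:ℝ)⁻¹ * ⟪xhat j, ys⟫
          + (N:ℝ)⁻¹ * φ (y j) - (N:ℝ)⁻¹ * ⟪xs, y j⟫
          - (N:ℝ)⁻¹ * (f₁ xs + h xs + φ ys) := by
      intro j _
      simp only [hGt]
      ring
    rw [Finset.sum_congr rfl hterm]
    rw [Finset.sum_sub_distrib, Finset.sum_sub_distrib, Finset.sum_add_distrib,
      Finset.sum_add_distrib]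
    have hconst : ∑ _j ∈ Finset.Icc 1 N, (N:ℝ)⁻¹ * (f₁ xs + h xs + φ ys)
        = f₁ xs + h xs + φ ys := by
      rw [← Finset.sum_mul, hwsum, one_mul]
    rw [hconst]
  -- cross terms rearrangement
  have hcross : -(⟪xs - (N : ℝ)⁻¹ • ∑ k ∈ Finset.Icc 1 N, xhat k, ys⟫
        - ⟪ys - (N : ℝ)⁻¹ • ∑ k ∈ Finset.Icc 1 N, y k, xs⟫)
      = ⟪(N : ℝ)⁻¹ • ∑ k ∈ Finset.Icc 1 N, xhat k, ys⟫
        - ⟪xs, (N : ℝ)⁻¹ • ∑ k ∈ Finset.Icc 1 N, y k⟫ := by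
    rw [inner_sub_left, inner_sub_left]
    rw [real_inner_comm ys xs,
      real_inner_comm ((N : ℝ)⁻¹ • ∑ k ∈ Finset.Icc 1 N, y k) xs]
    ring
  -- final combination
  have main1 : (f₁ ((N : ℝ)⁻¹ • ∑ k ∈ Finset.Icc 1 N, xhat k)
        + h ((N : ℝ)⁻¹ • ∑ k ∈ Finset.Icc 1 N, xhat k)
        + φ ((N : ℝ)⁻¹ • ∑ k ∈ Finset.Icc 1 N, y k))
      - (f₁ xs + h xs + φ ys)
      - (⟪xs - (N : ℝ)⁻¹ • ∑ k ∈ Finset.Icc 1 N, xhat k, ys⟫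
          - ⟪ys - (N : ℝ)⁻¹ • ∑ k ∈ Finset.Icc 1 N, y k, xs⟫)
      ≤ (N:ℝ)⁻¹ * ∑ j ∈ Finset.Icc 1 N, Gt j := by
    rw [← Finset.mul_sum] at hsplit
    linarith [J1, J2, I1, I2, hsplit, hcross]
  have main2 : (N:ℝ)⁻¹ * ∑ j ∈ Finset.Icc 1 N, Gt j
      ≤ (N:ℝ)⁻¹ * (V 0 + (1 / τ) * (1 + ‖ys‖) * ∑' k : ℕ, ε (k + 1)) := by
    apply mul_le_mul_of_nonneg_left _ (by positivity)
    rw [hreindex]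
    exact sumG
  have hrhs : (1 / (N:ℝ)) *
        (1 / 2 * ((1 / σ) * ‖x 0 - xs‖ ^ 2 - 2 * ⟪x 0 - xs, y 0 - ys⟫
            + (1 / τ) * ‖y 0 - ys‖ ^ 2)
          + (1 / τ) * (1 + ‖ys‖) * ∑' k : ℕ, ε (k + 1))
      = (N:ℝ)⁻¹ * (V 0 + (1 / τ) * (1 + ‖ys‖) * ∑' k : ℕ, ε (k + 1)) := by
    simp only [hV]
    rw [one_div]
    ring
  rw [hrhs]
  linarith [main1, main2]
end
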